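/- Let ξ = (G, L, A) be a system on a strongly connected multigraph with ρ(ξ) = 1 that admits an invariant (Barabanov) multinorm. Then for every starting vertex i and every x₀ ∈ L_i with ‖x₀‖_i = 1 there exists an infinite path α = (e_1, e_2, …) starting at i such that the trajectory x_k = A_{e_k} x_{k−1} satisfies ‖x_k‖ = 1 for all k ≥ 0. -/
import Mathlib


open Filter

section GraphSystem

variable {V : Type*} [Fintype V] [DecidableEq V] {E : Type*}
variable (src tgt : E → V) (L : V → Type*)
  [∀ v, NormedAddCommGroup (L v)] [∀ v, NormedSpace ℝ (L v)]
  [∀ v, FiniteDimensional ℝ (L v)]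

/-- The operator on the direct sum `∀ v, L v` induced by the edge map `A e : L (src e) →L L (tgt e)`:
it reads the component at `src e`, applies `A e`, and writes the result to the component `tgt e`. -/
noncomputable def bigOp (A : ∀ e, L (src e) →L[ℝ] L (tgt e)) (e : E) :
    (∀ v, L v) →L[ℝ] (∀ v, L v) :=
  LinearMap.toContinuousLinearMap
    { toFun := fun x v => if h : v = tgt e then cast (congrArg L h).symm (A e (x (src e))) else 0
      map_add' := by
        intro x y
        funext v
        by_cases h : v = tgt e
        · subst h; simp
        · simp [h]
      map_smul' := by
        intro c x
        funext v
        by_cases h : v = tgt e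
        · subst h; simp
        · simp [h] }

/-- Composition of operators along a list of edges (the head of the list acts first). -/
noncomputable def pathProd (A : ∀ e, L (src e) →L[ℝ] L (tgt e)) :
    List E → ((∀ v, L v) →L[ℝ] (∀ v, L v))
  | [] => 1
  | e :: l => pathProd A l * bigOp src tgt L A e

/-- A list of edges is composable (is a path) if consecutive edges match. -/
def Composable : List E → Prop := List.Chain' fun e f => tgt e = src f

/-- `IsPathFT l i j`: the list of edges `l` is a path from vertex `i` to vertex `j`. -/
def IsPathFT (l : List E) (i j : V) : Prop :=
  Composable src tgt l ∧ (∀ e ∈ l.head?, src e = i) ∧ (∀ e ∈ l.getLast?, tgt e = j) ∧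
    (l = [] → i = j)

/-- Inclusion of a component space into the direct sum. -/
def incl (i : V) (x : L i) : ∀ v, L v :=
  fun v => if h : v = i then cast (congrArg L h).symm x else 0

/-- A collection of subspaces is invariant if every edge map sends the subspace at its source
into the subspace at its target. -/
def InvariantSub (A : ∀ e, L (src e) →L[ℝ] L (tgt e)) (M : ∀ v, Submodule ℝ (L v)) : Prop :=
  ∀ e, ∀ x ∈ M (src e), A e x ∈ M (tgt e)

/-- The system is irreducible if the only invariant collections of subspaces are the trivial ones. -/
def IrredSys (A : ∀ e, L (src e) →L[ℝ] L (tgt e)) : Prop :=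
  ∀ M : ∀ v, Submodule ℝ (L v), InvariantSub src tgt L A M →
    (∀ v, M v = ⊥) ∨ (∀ v, M v = ⊤)

/-- `k ↦ max_{|α| = k} ‖Π_α‖^(1/k)`, whose limit is the constrained joint spectral radius. -/
noncomputable def jsrSeq (A : ∀ e, L (src e) →L[ℝ] L (tgt e)) (k : ℕ) : ℝ :=
  sSup {x : ℝ | ∃ l : List E, Composable src tgt l ∧ l.length = k ∧
    x = ‖pathProd src tgt L A l‖ ^ ((1 : ℝ) / k)}




lemma incl_apply_self (i : V) (x : L i) : incl L i x i = x := by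
  simp [incl]

lemma bigOp_incl (A : ∀ e, L (src e) →L[ℝ] L (tgt e)) (e : E) (v : V) (h : src e = v)
    (x : L v) :
    bigOp src tgt L A e (incl L v x) =
      incl L (tgt e) (A e (cast (congrArg L h).symm x)) := by
  subst h
  funext w
  by_cases hw : w = tgt e
  · subst hw
    simp [bigOp, incl]
  · simp [bigOp, incl, hw]

lemma pathProd_append_singleton (A : ∀ e, L (src e) →L[ℝ] L (tgt e)) (l : List E) (a : E) :
    pathProd src tgt L A (l ++ [a]) = bigOp src tgt L A a * pathProd src tgt L A l := by
  induction l with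
  | nil => simp [pathProd]
  | cons e l ih => simp [pathProd, ih, mul_assoc]

/-- **Unit-norm trajectories for Barabanov multinorms.** Let the system be on a strongly
connected multigraph, have `ρ(ξ) = 1`, and admit an invariant (Barabanov) multinorm `N`, i.e.
for every vertex `i` and `x ∈ L i` the maximum of `N (tgt e) (A e x)` over edges `e` out of `i`
equals `N i x`. Then for every starting vertex `i` and every `x₀ ∈ L i` with `N i x₀ = 1` there
is an infinite path `e : ℕ → E` starting at `i` along which the trajectory has multinorm `1` at
every step. -/
theorem exists_unit_norm_trajectory (A : ∀ e, L (src e) →L[ℝ] L (tgt e))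
    (hconn : ∀ i j : V, ∃ l : List E, l ≠ [] ∧ IsPathFT src tgt l i j)
    (hρ : Tendsto (jsrSeq src tgt L A) atTop (nhds 1))
    (N : ∀ v, Seminorm ℝ (L v)) (hpos : ∀ (v : V) (x : L v), x ≠ 0 → 0 < N v x)
    (hbar : ∀ (i : V) (x : L i),
      IsGreatest {y : ℝ | ∃ (e : E) (h : src e = i),
          y = N (tgt e) (A e (cast (congrArg L h).symm x))} (N i x)) :
    ∀ (i : V) (x₀ : L i), N i x₀ = 1 →
      ∃ e : ℕ → E, src (e 0) = i ∧ (∀ k : ℕ, src (e (k + 1)) = tgt (e k)) ∧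
        ∀ k : ℕ, N (tgt (e k))
          (pathProd src tgt L A (List.ofFn fun j : Fin (k + 1) => e j) (incl L i x₀)
            (tgt (e k))) = 1 := by
  intro i x₀ hx₀
  have hex : ∀ (v : V) (x : L v), ∃ e : E, ∃ h : src e = v,
      N v x = N (tgt e) (A e (cast (congrArg L h).symm x)) := fun v x => (hbar v x).1
  choose ed hs hNs using hex
  let f : ℕ → Σ v, L v := fun k =>
    Nat.rec ⟨i, x₀⟩
      (fun _ p => ⟨tgt (ed p.1 p.2),
        A (ed p.1 p.2) (cast (congrArg L (hs p.1 p.2)).symm p.2)⟩) k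
  let e : ℕ → E := fun k => ed (f k).1 (f k).2
  have hNf : ∀ k, N (f k).1 (f k).2 = 1 := by
    intro k
    induction k with
    | zero => exact hx₀
    | succ k ih => exact (hNs (f k).1 (f k).2).symm.trans ih
  have key : ∀ k, pathProd src tgt L A (List.ofFn fun j : Fin (k + 1) => e j)
      (incl L i x₀) = incl L (f (k + 1)).1 (f (k + 1)).2 := by
    intro k
    induction k with
    | zero =>
      show (pathProd src tgt L A [] * bigOp src tgt L A (e 0)) (incl L i x₀) = _
      have : pathProd src tgt L A [] = 1 := rfl
      rw [this, one_mul]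
      exact bigOp_incl src tgt L A (e 0) i (hs i x₀) x₀
    | succ k ih =>
      have hlist : (List.ofFn fun j : Fin (k + 2) => e j) =
          (List.ofFn fun j : Fin (k + 1) => e j) ++ [e (k + 1)] := by
        rw [List.ofFn_succ']
        simp [Fin.last]
      rw [hlist, pathProd_append_singleton]
      have : (bigOp src tgt L A (e (k + 1)) * pathProd src tgt L A
          (List.ofFn fun j : Fin (k + 1) => e j)) (incl L i x₀) =
          bigOp src tgt L A (e (k + 1)) (incl L (f (k + 1)).1 (f (k + 1)).2) := by
        rw [ContinuousLinearMap.mul_apply, ih]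
      rw [this]
      exact bigOp_incl src tgt L A (e (k + 1)) (f (k + 1)).1
        (hs (f (k + 1)).1 (f (k + 1)).2) (f (k + 1)).2
  refine ⟨e, hs i x₀, fun k => hs (f (k + 1)).1 (f (k + 1)).2, fun k => ?_⟩
  rw [key k]
  have : tgt (e k) = (f (k + 1)).1 := rfl
  rw [show incl L (f (k + 1)).1 (f (k + 1)).2 (tgt (e k)) = (f (k + 1)).2 from
    incl_apply_self L (f (k + 1)).1 (f (k + 1)).2]
  exact hNf (k + 1)


end GraphSystem
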